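/- Let ω₀ ∈ (0,1), s₁, s₂ ∈ (0,2) and θ ∈ ℝ, and let p₀, p₁, p₂ be the coefficients of the characteristic polynomial of the MRT-LB scheme. Then 1 − p₁ + p₀p₂ − p₀² > 0. -/
import Mathlib


/-- For `ω₀ ∈ (0,1)`, `s₁, s₂ ∈ (0,2)` and any `θ`, one has
`1 − p₁ + p₀p₂ − p₀² > 0`. -/
theorem routh_condition_five
    (ω₀ s₁ s₂ θ p₀ p₁ p₂ : ℝ)
    (hω₀ : ω₀ ∈ Set.Ioo (0 : ℝ) 1)
    (hs₁ : s₁ ∈ Set.Ioo (0 : ℝ) 2)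
    (hs₂ : s₂ ∈ Set.Ioo (0 : ℝ) 2)
    (hp₀ : p₀ = (s₁ - 1) * (1 - s₂))
    (hp₁ : p₁ = (s₁ - 1) * (s₂ * ω₀ - 1)
      + ((s₁ - 2) * (s₂ - 1) + s₂ * ω₀ * (1 - s₁)) * Real.cos θ)
    (hp₂ : p₂ = s₂ - s₂ * ω₀ - 1 + (s₂ * ω₀ + s₁ - 2) * Real.cos θ) :
    0 < 1 - p₁ + p₀ * p₂ - p₀ ^ 2 := by
  obtain ⟨hw0, hw1⟩ := hω₀
  obtain ⟨hs10, hs12⟩ := hs₁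
  obtain ⟨hs20, hs22⟩ := hs₂
  set c := Real.cos θ with hc
  have hc1 : -1 ≤ c := Real.neg_one_le_cos θ
  have hc2 : c ≤ 1 := Real.cos_le_one θ
  have hP : 0 < s₁ + s₂ - s₁ * s₂ := by nlinarith
  have hQ : 0 < 2 - s₁ - s₂ + s₁ * s₂ := by nlinarith
  have hT : 0 < s₁ * s₂ * (s₁ + s₂ - s₁ * s₂) :=
    mul_pos (mul_pos hs10 hs20) hP
  have hX : 0 < (1 - ω₀) * ((2 - s₂) * s₁ * (2 - s₁ - s₂ + s₁ * s₂))
      + ω₀ * ((2 - s₂) * (2 - s₁) * (s₁ + s₂ - s₁ * s₂)) := by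
    have h1 : 0 < (1 - ω₀) * ((2 - s₂) * s₁ * (2 - s₁ - s₂ + s₁ * s₂)) :=
      mul_pos (by linarith) (mul_pos (mul_pos (by linarith) hs10) hQ)
    have h2 : 0 < ω₀ * ((2 - s₂) * (2 - s₁) * (s₁ + s₂ - s₁ * s₂)) :=
      mul_pos hw0 (mul_pos (mul_pos (by linarith) (by linarith)) hP)
    linarith
  have key : 1 - p₁ + p₀ * p₂ - p₀ ^ 2 =
      ((1 + c) * (s₁ * s₂ * (s₁ + s₂ - s₁ * s₂))
        + (1 - c) * ((1 - ω₀) * ((2 - s₂) * s₁ * (2 - s₁ - s₂ + s₁ * s₂))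
          + ω₀ * ((2 - s₂) * (2 - s₁) * (s₁ + s₂ - s₁ * s₂)))) / 2 := by
    subst hp₀ hp₁ hp₂; ring
  rw [key]
  rcases lt_or_eq_of_le hc1 with h | h
  · have := mul_pos (show (0:ℝ) < 1 + c by linarith) hT
    nlinarith [mul_nonneg (show (0:ℝ) ≤ 1 - c by linarith) hX.le]
  · rw [← h]; norm_num; linarith
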